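/- Let E be any set of points of the Hermitian curve. Then: (a) there exists a nonzero polynomial p ∈ F[x, y] with deg_y p ≤ q − 1 that vanishes at every point of E and satisfies deg_{q,q+1}(p) ≤ |E| + g; and (b) every nonzero polynomial p ∈ F[x, y] with deg_y p ≤ q − 1 that vanishes at every point of E satisfies deg_{q,q+1}(p) ≥ |E|. In particular, the minimal weighted degree Λ-polynomial vanishing on E has weighted degree between |E| and |E| + g. -/

import Mathlib

namespace Stmt7Aux
open Finset

variable (q : ℕ)

/-- membership in the numerical semigroup generated by q, q+1 -/
def inS (s : ℕ) : Prop := s % q ≤ s / q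

instance : DecidablePred (inS q) := fun _ => inferInstanceAs (Decidable (_ ≤ _))

lemma inS_rep {s : ℕ} (h : inS q s) : s = q * (s / q - s % q) + (q+1) * (s % q) := by
  have h' : s % q ≤ s / q := h
  have e1 : q * (s / q - s % q) + q * (s % q) = q * (s / q) := by
    rw [← Nat.left_distrib]; congr 1; omega
  have e2 : (q+1) * (s % q) = q * (s % q) + s % q := by ring
  have e3 := Nat.div_add_mod s q
  omega

lemma rep_inS {i j : ℕ} (hq : 0 < q) (hj : j < q) : inS q (q * i + (q+1) * j) := by
  have h1 : q * i + (q+1) * j = j + q * (i + j) := by ring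
  unfold inS
  rw [h1, Nat.add_mul_mod_self_left, Nat.add_mul_div_left _ _ hq,
    Nat.mod_eq_of_lt hj, Nat.div_eq_of_lt hj]
  omega

lemma inS_add {a b : ℕ} (hq : 0 < q) (ha : inS q a) (hb : inS q b) : inS q (a + b) := by
  have h1 := inS_rep q ha
  have h2 := inS_rep q hb
  set i := a / q - a % q
  set j := a % q
  set i' := b / q - b % q
  set j' := b % q
  have hj : j < q := Nat.mod_lt _ hq
  have hj' : j' < q := Nat.mod_lt _ hq
  rcases lt_or_ge (j + j') q with h | h
  · have he : a + b = q * (i + i') + (q+1) * (j + j') := by rw [h1, h2]; ring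
    rw [he]; exact rep_inS q hq h
  · have hk : j + j' = (j + j' - q) + q := by omega
    have he : a + b = q * (i + i' + (q+1)) + (q+1) * (j + j' - q) := by
      have e1 : (q+1) * (j + j' - q) + (q+1) * q = (q+1) * (j + j') := by
        rw [← Nat.mul_add]; congr 1; omega
      have e2 : q * (i + i' + (q+1)) = q * i + q * i' + (q+1) * q := by ring
      have e3 : (q+1) * (j + j') = (q+1) * j + (q+1) * j' := by ring
      omega
    rw [he]
    exact rep_inS q hq (by omega)

lemma inS_large {s : ℕ} (hq : 0 < q) (hs : q * q ≤ s + 1) : inS q s := by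
  obtain ⟨q', rfl⟩ : ∃ q', q = q' + 1 := ⟨q - 1, by omega⟩
  have h1 : (q' + 1) * (q' + 1) = q' * (q' + 1) + (q' + 1) := by ring
  have h2 : q' * (q' + 1) ≤ s := by omega
  have h3 : q' ≤ s / (q' + 1) := (Nat.le_div_iff_mul_le (by omega)).2 (by omega)
  have h4 : s % (q' + 1) < q' + 1 := Nat.mod_lt _ (by omega)
  unfold inS; omega

/-- the set of gaps of the semigroup -/
def G : Finset ℕ := (range q).biUnion (fun j => (range j).image (fun k => j + q * k))

lemma mem_G_iff {s : ℕ} : s ∈ G q ↔ ∃ j, j < q ∧ ∃ k, k < j ∧ s = j + q * k := by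
  simp only [G, mem_biUnion, mem_range, mem_image]
  constructor
  · rintro ⟨j, hj, k, hk, rfl⟩; exact ⟨j, hj, k, hk, rfl⟩
  · rintro ⟨j, hj, k, hk, rfl⟩; exact ⟨j, hj, k, hk, rfl⟩

lemma not_inS_iff {s : ℕ} (hq : 0 < q) : ¬ inS q s ↔ s ∈ G q := by
  rw [mem_G_iff]
  constructor
  · intro h
    refine ⟨s % q, Nat.mod_lt _ hq, s / q, by unfold inS at h; omega, ?_⟩
    have := Nat.div_add_mod s q
    omega
  · rintro ⟨j, hj, k, hk, rfl⟩
    unfold inS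
    rw [Nat.add_mul_mod_self_left, Nat.add_mul_div_left _ _ hq,
      Nat.mod_eq_of_lt hj, Nat.div_eq_of_lt hj]
    omega

lemma mem_G_lt {s : ℕ} (h : s ∈ G q) : s < q * q := by
  rw [mem_G_iff] at h
  obtain ⟨j, hj, k, hk, rfl⟩ := h
  calc j + q * k < q + q * k := by omega
  _ = q * (k + 1) := by ring
  _ ≤ q * j := Nat.mul_le_mul_left _ (by omega)
  _ ≤ q * q := Nat.mul_le_mul_left _ (by omega)

lemma card_G (hq : 0 < q) : (G q).card = q * (q - 1) / 2 := by
  rw [G, card_biUnion]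
  · have : ∀ j ∈ range q, ((range j).image (fun k => j + q * k)).card = j := by
      intro j hj
      rw [card_image_of_injective _ (fun a b hab =>
        Nat.eq_of_mul_eq_mul_left hq (by omega)), card_range]
    rw [sum_congr rfl this, Finset.sum_range_id]
  · intro a ha b hb hab
    simp only [disjoint_left, mem_image, mem_range]
    rintro x ⟨k, hk, rfl⟩ ⟨k', hk', he⟩
    rw [mem_coe, mem_range] at ha hb
    have h1 : (a + q * k) % q = a := by
      rw [Nat.add_mul_mod_self_left, Nat.mod_eq_of_lt ha]
    have h2 : (b + q * k') % q = b := by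
      rw [Nat.add_mul_mod_self_left, Nat.mod_eq_of_lt hb]
    exact hab (by rw [← h1, ← he, h2])

/-- elements of the semigroup below m -/
def Sfin (m : ℕ) : Finset ℕ := (range m).filter (inS q)

lemma card_Sfin_ge (m : ℕ) (hq : 0 < q) : m ≤ (Sfin q m).card + q * (q-1) / 2 := by
  have h1 := Finset.card_filter_add_card_filter_not (s := range m) (p := inS q)
  have h2 : (range m).filter (fun s => ¬ inS q s) ⊆ G q := by
    intro s hs
    rw [mem_filter] at hs
    exact (not_inS_iff q hq).1 hs.2
  have := card_le_card h2
  rw [card_G q hq] at this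
  rw [card_range] at h1
  unfold Sfin
  omega

lemma card_Sfin_eq (m : ℕ) (hq : 0 < q) (hm : q * q ≤ m) :
    (Sfin q m).card + q * (q-1) / 2 = m := by
  have h1 := Finset.card_filter_add_card_filter_not (s := range m) (p := inS q)
  have h2 : (range m).filter (fun s => ¬ inS q s) = G q := by
    ext s
    rw [mem_filter, mem_range]
    constructor
    · rintro ⟨_, hs⟩; exact (not_inS_iff q hq).1 hs
    · intro hs
      exact ⟨lt_of_lt_of_le (mem_G_lt q hs) hm, (not_inS_iff q hq).2 hs⟩
  rw [h2, card_G q hq, card_range] at h1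
  unfold Sfin
  omega

lemma le_g (hq : 0 < q) : q * (q-1) / 2 ≤ q * q := by
  have := card_Sfin_eq q (q*q) hq le_rfl
  omega

/-- The main counting lemma for part (b) -/
lemma count_T' (D : ℕ) (hq : 0 < q) (hD : inS q D) :
    ((range (D + q*q)).filter (fun s => inS q s ∧ ¬(D ≤ s ∧ inS q (s - D)))).card ≤ D := by
  classical
  set N := D + q * q with hN
  set A : Finset ℕ := (range N).filter (inS q) with hA
  have hsplit := Finset.card_filter_add_card_filter_not (s := A)
    (p := fun s => D ≤ s ∧ inS q (s - D))
  have hsub : (range N).filter (fun s => inS q s ∧ ¬(D ≤ s ∧ inS q (s - D)))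
      = A.filter (fun s => ¬(D ≤ s ∧ inS q (s - D))) := by
    rw [hA, filter_filter]
  have hB : A.filter (fun s => D ≤ s ∧ inS q (s - D)) = (Sfin q (q*q)).image (· + D) := by
    ext s
    simp only [hA, Sfin, mem_filter, mem_range, mem_image]
    constructor
    · rintro ⟨⟨hsN, hsS⟩, hsD, hsDS⟩
      exact ⟨s - D, ⟨by omega, hsDS⟩, by omega⟩
    · rintro ⟨t, ⟨ht, htS⟩, rfl⟩
      refine ⟨⟨by omega, inS_add q hq htS hD⟩, by omega, by simpa using htS⟩
  have hBcard : (A.filter (fun s => D ≤ s ∧ inS q (s - D))).card = (Sfin q (q*q)).card := by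
    rw [hB, card_image_of_injective _ (add_left_injective D)]
  have hAcard : A.card + q * (q-1) / 2 = N := card_Sfin_eq q N hq (by omega)
  have hScard : (Sfin q (q*q)).card + q * (q-1) / 2 = q * q := card_Sfin_eq q (q*q) hq le_rfl
  rw [hsub]
  omega

end Stmt7Aux


namespace Stmt7Aux2
open Finset MvPolynomial

variable (q : ℕ)

/-- weight of an exponent -/
def W (d : Fin 2 →₀ ℕ) : ℕ := q * d 0 + (q+1) * d 1

lemma weight_eq (d : Fin 2 →₀ ℕ) : (Finsupp.weight ![q, q+1]) d = W q d := by
  rw [Finsupp.weight_apply, Finsupp.sum_fintype]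
  · simp [Fin.sum_univ_two, W, mul_comm]
  · intro i; simp

lemma W_mod {d : Fin 2 →₀ ℕ} (hq : 0 < q) (hd : d 1 < q) :
    W q d % q = d 1 ∧ W q d / q = d 0 + d 1 := by
  have h1 : W q d = d 1 + q * (d 0 + d 1) := by unfold W; ring
  rw [h1, Nat.add_mul_mod_self_left, Nat.add_mul_div_left _ _ hq,
    Nat.mod_eq_of_lt hd, Nat.div_eq_of_lt hd]
  omega

lemma normal_inj {d d' : Fin 2 →₀ ℕ} (hq : 0 < q) (hd : d 1 < q) (hd' : d' 1 < q)
    (h : W q d = W q d') : d = d' := by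
  obtain ⟨h1, h2⟩ := W_mod q hq hd
  obtain ⟨h1', h2'⟩ := W_mod q hq hd'
  have e1 : d 1 = d' 1 := by rw [← h1, ← h1', h]
  have e0 : d 0 = d' 0 := by rw [h] at h2; omega
  ext i
  fin_cases i
  · exact e0
  · exact e1

lemma inS_W {d : Fin 2 →₀ ℕ} (hq : 0 < q) (hd : d 1 < q) : Stmt7Aux.inS q (W q d) := by
  obtain ⟨h1, h2⟩ := W_mod q hq hd
  unfold Stmt7Aux.inS
  omega

/-- the normal exponent of a given semigroup weight -/
noncomputable def expOf (s : ℕ) : Fin 2 →₀ ℕ :=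
  Finsupp.single 0 (s / q - s % q) + Finsupp.single 1 (s % q)

lemma expOf_apply0 (s : ℕ) : expOf q s 0 = s / q - s % q := by simp [expOf]

lemma expOf_apply1 (s : ℕ) : expOf q s 1 = s % q := by simp [expOf]

lemma expOf_normal (s : ℕ) (hq : 0 < q) : expOf q s 1 < q := by
  rw [expOf_apply1]; exact Nat.mod_lt _ hq

lemma W_expOf {s : ℕ} (h : Stmt7Aux.inS q s) : W q (expOf q s) = s := by
  rw [W, expOf_apply0, expOf_apply1]
  exact (Stmt7Aux.inS_rep q h).symm

end Stmt7Aux2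

namespace Stmt7Aux2
open Finset MvPolynomial

variable (q : ℕ) {F : Type} [Field F]

/-- exponent obtained by replacing y^q by x^(q+1) -/
noncomputable def expA (d : Fin 2 →₀ ℕ) : Fin 2 →₀ ℕ :=
  d - Finsupp.single 1 q + Finsupp.single 0 (q+1)

/-- exponent obtained by replacing y^q by y -/
noncomputable def expB (d : Fin 2 →₀ ℕ) : Fin 2 →₀ ℕ :=
  d - Finsupp.single 1 q + Finsupp.single 1 1

lemma expA_apply0 (d : Fin 2 →₀ ℕ) : expA q d 0 = d 0 + (q+1) := by
  simp [expA, Finsupp.tsub_apply]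

lemma expA_apply1 (d : Fin 2 →₀ ℕ) : expA q d 1 = d 1 - q := by
  simp [expA, Finsupp.tsub_apply]

lemma expB_apply0 (d : Fin 2 →₀ ℕ) : expB q d 0 = d 0 := by
  simp [expB, Finsupp.tsub_apply]

lemma expB_apply1 (d : Fin 2 →₀ ℕ) : expB q d 1 = d 1 - q + 1 := by
  simp [expB, Finsupp.tsub_apply]

lemma W_expA {d : Fin 2 →₀ ℕ} (hd : q ≤ d 1) : W q (expA q d) = W q d := by
  rw [W, W, expA_apply0, expA_apply1]
  have e1 : (q+1) * (d 1 - q) + (q+1) * q = (q+1) * d 1 := by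
    rw [← Nat.mul_add]; congr 1; omega
  have e2 : q * (d 0 + (q+1)) = q * d 0 + (q+1) * q := by ring
  omega

lemma W_expB {d : Fin 2 →₀ ℕ} (hq2 : 2 ≤ q) (hd : q ≤ d 1) : W q (expB q d) < W q d := by
  rw [W, W, expB_apply0, expB_apply1]
  have e1 : (q+1) * (d 1 - q + 1) < (q+1) * d 1 :=
    mul_lt_mul_of_pos_left (by omega) (by omega)
  omega

lemma W_add (d μ : Fin 2 →₀ ℕ) : W q (d + μ) = W q d + W q μ := by
  rw [W, W, W, Finsupp.add_apply, Finsupp.add_apply]; ring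

/-- reduction of a single monomial -/
noncomputable def hmon (d : Fin 2 →₀ ℕ) (c : F) : MvPolynomial (Fin 2) F :=
  if d 1 < q then monomial d c
  else monomial (expA q d) c - monomial (expB q d) c

lemma eval_mono2 (α β : F) (d : Fin 2 →₀ ℕ) (c : F) :
    eval ![α, β] (monomial d c) = c * α ^ d 0 * β ^ d 1 := by
  rw [eval_monomial, Finsupp.prod_fintype]
  · simp [Fin.prod_univ_two, mul_assoc]
  · intro i; simp

lemma eval_hmon {α β : F} (hcurve : β ^ q + β = α ^ (q+1)) (d : Fin 2 →₀ ℕ) (c : F) :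
    eval ![α, β] (hmon q d c) = c * α ^ d 0 * β ^ d 1 := by
  unfold hmon
  split_ifs with h
  · exact eval_mono2 α β d c
  · rw [map_sub, eval_mono2, eval_mono2, expA_apply0, expA_apply1, expB_apply0, expB_apply1]
    have hβ : β ^ q = α ^ (q+1) - β := eq_sub_of_add_eq hcurve
    obtain ⟨k, hk1, hk2⟩ : ∃ k, d 1 - q = k ∧ d 1 = k + q := ⟨d 1 - q, rfl, by omega⟩
    rw [hk1, hk2, pow_add β k q, hβ]
    ring

lemma coeff_hmon_top {d : Fin 2 →₀ ℕ} (hq2 : 2 ≤ q) (hd2 : d 1 ≤ 2*q - 2) {d₀ : Fin 2 →₀ ℕ}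
    (hd₀ : d₀ 1 < q) (hW : W q d₀ = W q d) (c : F) : coeff d₀ (hmon q d c) = c := by
  unfold hmon
  split_ifs with h
  · have : d = d₀ := normal_inj q (by omega) h hd₀ hW.symm
    rw [coeff_monomial, if_pos this]
  · have hA : expA q d = d₀ := by
      refine normal_inj q (by omega) ?_ hd₀ ?_
      · rw [expA_apply1]; omega
      · rw [W_expA q (by omega), hW]
    have hB : expB q d ≠ d₀ := by
      intro hcon
      have h1 : W q (expB q d) < W q d := W_expB q hq2 (by omega)
      rw [hcon, hW] at h1
      omega
    rw [coeff_sub, coeff_monomial, coeff_monomial, if_pos hA, if_neg hB, sub_zero]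

lemma coeff_hmon_ne {d : Fin 2 →₀ ℕ} (hq2 : 2 ≤ q) (hd2 : d 1 ≤ 2*q - 2) {d' : Fin 2 →₀ ℕ}
    {c : F} (h : coeff d' (hmon q d c) ≠ 0) : d' 1 < q ∧ W q d' ≤ W q d := by
  unfold hmon at h
  split_ifs at h with hcase
  · rw [coeff_monomial] at h
    by_cases he : d = d'
    · subst he; exact ⟨hcase, le_rfl⟩
    · rw [if_neg he] at h; exact absurd rfl h
  · rw [coeff_sub, coeff_monomial, coeff_monomial] at h
    by_cases hA : expA q d = d'
    · subst hA
      refine ⟨?_, le_of_eq (W_expA q (by omega))⟩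
      rw [expA_apply1]; omega
    · by_cases hB : expB q d = d'
      · subst hB
        refine ⟨?_, le_of_lt (W_expB q hq2 (by omega))⟩
        rw [expB_apply1]; omega
      · rw [if_neg hA, if_neg hB] at h
        exact absurd (by ring) h

/-- reduced form of Λ * x^(μ 0) y^(μ 1) -/
noncomputable def Qpoly (Λ : MvPolynomial (Fin 2) F) (μ : Fin 2 →₀ ℕ) : MvPolynomial (Fin 2) F :=
  ∑ d ∈ Λ.support, hmon q (d + μ) (coeff d Λ)

lemma eval_Qpoly {α β : F} (hcurve : β ^ q + β = α ^ (q+1)) (Λ : MvPolynomial (Fin 2) F)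
    (μ : Fin 2 →₀ ℕ) :
    eval ![α, β] (Qpoly q Λ μ) = eval ![α, β] Λ * (α ^ μ 0 * β ^ μ 1) := by
  rw [Qpoly, map_sum]
  have h1 : ∀ d ∈ Λ.support, eval ![α, β] (hmon q (d + μ) (coeff d Λ))
      = (coeff d Λ * α ^ d 0 * β ^ d 1) * (α ^ μ 0 * β ^ μ 1) := by
    intro d _
    rw [eval_hmon q hcurve, Finsupp.add_apply, Finsupp.add_apply, pow_add, pow_add]
    ring
  rw [Finset.sum_congr rfl h1, ← Finset.sum_mul]
  congr 1
  rw [eval_eq']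
  refine Finset.sum_congr rfl fun d _ => ?_
  rw [Fin.prod_univ_two]
  simp [mul_assoc]

lemma coeff_Qpoly_bound {Λ : MvPolynomial (Fin 2) F} {μ : Fin 2 →₀ ℕ} (hq2 : 2 ≤ q)
    (hΛ : ∀ d ∈ Λ.support, d 1 < q) (hμ : μ 1 < q) {d' : Fin 2 →₀ ℕ}
    (h : coeff d' (Qpoly q Λ μ) ≠ 0) {n : ℕ} (hn : ∀ d ∈ Λ.support, W q d ≤ n) :
    d' 1 < q ∧ W q d' ≤ n + W q μ := by
  rw [Qpoly, MvPolynomial.coeff_sum] at h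
  obtain ⟨d, hd, hne⟩ := Finset.exists_ne_zero_of_sum_ne_zero h
  have h1 : (d + μ) 1 ≤ 2*q - 2 := by
    rw [Finsupp.add_apply]
    have := hΛ d hd
    omega
  obtain ⟨h2, h3⟩ := coeff_hmon_ne q hq2 h1 hne
  refine ⟨h2, ?_⟩
  rw [W_add] at h3
  have := hn d hd
  omega

lemma coeff_Qpoly_top {Λ : MvPolynomial (Fin 2) F} {μ : Fin 2 →₀ ℕ} (hq2 : 2 ≤ q)
    (hΛ : ∀ d ∈ Λ.support, d 1 < q) (hμ : μ 1 < q) {dm : Fin 2 →₀ ℕ} (hdm : dm ∈ Λ.support)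
    (htop : ∀ d ∈ Λ.support, d ≠ dm → W q d < W q dm) {d₀ : Fin 2 →₀ ℕ}
    (hd₀ : d₀ 1 < q) (hW : W q d₀ = W q dm + W q μ) :
    coeff d₀ (Qpoly q Λ μ) = coeff dm Λ := by
  rw [Qpoly, MvPolynomial.coeff_sum]
  rw [Finset.sum_eq_single_of_mem dm hdm]
  · refine coeff_hmon_top q hq2 ?_ hd₀ ?_ _
    · rw [Finsupp.add_apply]; have := hΛ dm hdm; omega
    · rw [W_add, hW]
  · intro d hd hne
    by_contra hc
    have h1 : (d + μ) 1 ≤ 2*q - 2 := by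
      rw [Finsupp.add_apply]; have := hΛ d hd; omega
    obtain ⟨_, h3⟩ := coeff_hmon_ne q hq2 h1 hc
    rw [W_add] at h3
    have := htop d hd hne
    omega

end Stmt7Aux2

namespace Stmt7Aux2
open Finset MvPolynomial

variable (q : ℕ) {F : Type} [Field F]

/-- generators: small monomials together with reduced multiples of Λ -/
def gens (Λ : MvPolynomial (Fin 2) F) (D : ℕ) : Set (MvPolynomial (Fin 2) F) :=
  ((fun d => monomial d (1:F)) ''
      {d : Fin 2 →₀ ℕ | d 1 < q ∧ ¬(D ≤ W q d ∧ Stmt7Aux.inS q (W q d - D))}) ∪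
  ((fun μ => Qpoly q Λ μ) '' {μ : Fin 2 →₀ ℕ | μ 1 < q})

lemma mem_span_gens (hq2 : 2 ≤ q) (Λ : MvPolynomial (Fin 2) F)
    (hΛn : ∀ d ∈ Λ.support, d 1 < q) {dm : Fin 2 →₀ ℕ} (hdm : dm ∈ Λ.support)
    (htop : ∀ d ∈ Λ.support, d ≠ dm → W q d < W q dm) :
    ∀ n (P : MvPolynomial (Fin 2) F), (∀ d ∈ P.support, d 1 < q ∧ W q d ≤ n) →
      P ∈ Submodule.span F (gens q Λ (W q dm)) := by
  have hq0 : 0 < q := by omega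
  have hlc : coeff dm Λ ≠ 0 := mem_support_iff.1 hdm
  have hΛtop : ∀ d ∈ Λ.support, W q d ≤ W q dm := by
    intro d hd
    by_cases he : d = dm
    · subst he; exact le_rfl
    · exact le_of_lt (htop d hd he)
  intro n
  induction n using Nat.strong_induction_on with
  | _ n IH =>
    intro P hP
    by_cases hP0 : P = 0
    · subst hP0; exact Submodule.zero_mem _
    have hsupp : P.support.Nonempty :=
      Finset.nonempty_iff_ne_empty.2 (fun h => hP0 (MvPolynomial.support_eq_empty.1 h))
    obtain ⟨dP, hdPmem, hdPsup⟩ := Finset.exists_mem_eq_sup P.support hsupp (W q)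
    have hdPn : dP 1 < q := (hP dP hdPmem).1
    have htopP : ∀ d ∈ P.support, W q d ≤ W q dP := by
      intro d hd; rw [← hdPsup]; exact Finset.le_sup hd
    have hc : coeff dP P ≠ 0 := mem_support_iff.1 hdPmem
    -- find the "reducer" R
    obtain ⟨R, hRspan, hRc, hRsupp⟩ :
        ∃ R, R ∈ Submodule.span F (gens q Λ (W q dm)) ∧ coeff dP R = coeff dP P ∧
          (∀ d', coeff d' R ≠ 0 → d' 1 < q ∧ W q d' ≤ W q dP) := by
      by_cases hcond : (W q dm) ≤ W q dP ∧ Stmt7Aux.inS q (W q dP - W q dm)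
      · -- use Qpoly
        set μ := expOf q (W q dP - W q dm) with hμdef
        have hμn : μ 1 < q := expOf_normal q _ hq0
        have hμW : W q μ = W q dP - W q dm := W_expOf q hcond.2
        have hWeq : W q dP = W q dm + W q μ := by omega
        have hQtop : coeff dP (Qpoly q Λ μ) = coeff dm Λ :=
          coeff_Qpoly_top q hq2 hΛn hμn hdm htop hdPn hWeq
        refine ⟨(coeff dP P / coeff dm Λ) • Qpoly q Λ μ, ?_, ?_, ?_⟩
        · exact Submodule.smul_mem _ _ (Submodule.subset_span (Or.inr ⟨μ, hμn, rfl⟩))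
        · rw [MvPolynomial.coeff_smul, hQtop, smul_eq_mul, div_mul_cancel₀ _ hlc]
        · intro d' hd'
          rw [MvPolynomial.coeff_smul, smul_eq_mul] at hd'
          have h1 : coeff d' (Qpoly q Λ μ) ≠ 0 := fun h => hd' (by rw [h, mul_zero])
          obtain ⟨h2, h3⟩ := coeff_Qpoly_bound q hq2 hΛn hμn h1 hΛtop
          exact ⟨h2, by omega⟩
      · -- use a monomial generator
        refine ⟨coeff dP P • monomial dP 1, ?_, ?_, ?_⟩
        · exact Submodule.smul_mem _ _ (Submodule.subset_span (Or.inl ⟨dP, ⟨hdPn, hcond⟩, rfl⟩))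
        · rw [MvPolynomial.coeff_smul, coeff_monomial, if_pos rfl, smul_eq_mul, mul_one]
        · intro d' hd'
          rw [MvPolynomial.coeff_smul, coeff_monomial, smul_eq_mul] at hd'
          have : dP = d' := by
            by_contra hne
            rw [if_neg hne, mul_zero] at hd'
            exact hd' rfl
          subst this
          exact ⟨hdPn, le_rfl⟩
    -- now recurse on P - R
    set P' := P - R with hP'def
    have hP'supp : ∀ d ∈ P'.support, d 1 < q ∧ W q d < W q dP := by
      intro d hd
      have hcd : coeff d P' ≠ 0 := mem_support_iff.1 hd
      have hdP' : d ≠ dP := by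
        intro he; subst he
        rw [hP'def, coeff_sub, hRc, sub_self] at hcd
        exact hcd rfl
      rw [hP'def, coeff_sub] at hcd
      have hprops : d 1 < q ∧ W q d ≤ W q dP := by
        by_cases h1 : coeff d P = 0
        · refine hRsupp d ?_
          intro h2
          rw [h1, h2, sub_zero] at hcd
          exact hcd rfl
        · have hd2 := hP d (mem_support_iff.2 h1)
          exact ⟨hd2.1, htopP d (mem_support_iff.2 h1)⟩
      refine ⟨hprops.1, lt_of_le_of_ne hprops.2 ?_⟩
      intro hWeq
      exact hdP' (normal_inj q hq0 hprops.1 hdPn hWeq)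
    have hrec : P' ∈ Submodule.span F (gens q Λ (W q dm)) := by
      by_cases hP'0 : P' = 0
      · rw [hP'0]; exact Submodule.zero_mem _
      · have hsupp' : P'.support.Nonempty :=
          Finset.nonempty_iff_ne_empty.2 (fun h => hP'0 (MvPolynomial.support_eq_empty.1 h))
        obtain ⟨d₁, hd₁⟩ := hsupp'
        have hn1 : 1 ≤ n := by
          have := (hP'supp d₁ hd₁).2
          have := (hP dP hdPmem).2
          omega
        refine IH (n-1) (by omega) P' ?_
        intro d hd
        have h1 := hP'supp d hd
        have h2 := (hP dP hdPmem).2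
        exact ⟨h1.1, by omega⟩
    have : P = P' + R := by rw [hP'def]; ring
    rw [this]
    exact Submodule.add_mem _ hrec hRspan

lemma mem_span_gens' (hq2 : 2 ≤ q) (Λ : MvPolynomial (Fin 2) F)
    (hΛn : ∀ d ∈ Λ.support, d 1 < q) {dm : Fin 2 →₀ ℕ} (hdm : dm ∈ Λ.support)
    (htop : ∀ d ∈ Λ.support, d ≠ dm → W q d < W q dm)
    (P : MvPolynomial (Fin 2) F) (hP : ∀ d ∈ P.support, d 1 < q) :
    P ∈ Submodule.span F (gens q Λ (W q dm)) :=
  mem_span_gens q hq2 Λ hΛn hdm htop (P.support.sup (W q)) P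
    (fun d hd => ⟨hP d hd, Finset.le_sup hd⟩)

end Stmt7Aux2

namespace Stmt7Aux2
open Finset MvPolynomial

variable (q : ℕ) {F : Type} [Field F]

lemma degreeOf_X0_sub_C (a : F) : degreeOf 1 ((X 0 : MvPolynomial (Fin 2) F) - C a) = 0 := by
  have h : (X 0 : MvPolynomial (Fin 2) F) - C a = X 0 + C (-a) := by
    rw [map_neg, sub_eq_add_neg]
  rw [h]
  refine Nat.eq_zero_of_le_zero (le_trans (degreeOf_add_le _ _ _) ?_)
  rw [degreeOf_C, degreeOf_X, if_neg (by decide)]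
  omega

lemma degreeOf_X1_sub_C (b : F) : degreeOf 1 ((X 1 : MvPolynomial (Fin 2) F) - C b) ≤ 1 := by
  have h : (X 1 : MvPolynomial (Fin 2) F) - C b = X 1 + C (-b) := by
    rw [map_neg, sub_eq_add_neg]
  rw [h]
  refine le_trans (degreeOf_add_le _ _ _) ?_
  rw [degreeOf_C, degreeOf_X, if_pos rfl]
  omega

lemma fiber_card_le [DecidableEq F] (hq2 : 2 ≤ q) (s : Finset (F × F))
    (hs : ∀ P ∈ s, P.2 ^ q + P.2 = P.1 ^ (q+1)) (c : F) :
    ((s.filter (fun Q : F × F => Q.1 = c)).image Prod.snd).card ≤ q := by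
  classical
  set g : Polynomial F := Polynomial.X ^ q + Polynomial.X - Polynomial.C (c ^ (q+1)) with hg
  have hgne : g ≠ 0 := by
    intro h
    have hc : g.coeff q = 1 := by
      rw [hg]
      simp only [Polynomial.coeff_sub, Polynomial.coeff_add, Polynomial.coeff_X_pow,
        Polynomial.coeff_X, Polynomial.coeff_C, if_true]
      rw [if_neg (by omega : ¬(1:ℕ) = q), if_neg (by omega : ¬q = 0)]
      ring
    rw [h] at hc
    simp at hc
  have hdeg : g.natDegree ≤ q := by
    rw [hg]
    refine le_trans (Polynomial.natDegree_sub_le _ _) ?_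
    simp only [Polynomial.natDegree_C, Polynomial.natDegree_X_pow]
    refine max_le (le_trans (Polynomial.natDegree_add_le _ _) ?_) (by omega)
    simp only [Polynomial.natDegree_X_pow, Polynomial.natDegree_X]
    omega
  have hsub : (s.filter (fun Q : F × F => Q.1 = c)).image Prod.snd ⊆ g.roots.toFinset := by
    intro b hb
    rw [mem_image] at hb
    obtain ⟨Q, hQ, rfl⟩ := hb
    rw [mem_filter] at hQ
    rw [Multiset.mem_toFinset, Polynomial.mem_roots hgne]
    have hQ2 := hs Q hQ.1
    rw [hQ.2] at hQ2
    rw [Polynomial.IsRoot, hg]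
    simp only [Polynomial.eval_sub, Polynomial.eval_add, Polynomial.eval_pow,
      Polynomial.eval_X, Polynomial.eval_C]
    rw [hQ2]
    ring
  calc ((s.filter (fun Q : F × F => Q.1 = c)).image Prod.snd).card
      ≤ g.roots.toFinset.card := card_le_card hsub
    _ ≤ Multiset.card g.roots := Multiset.toFinset_card_le _
    _ ≤ g.natDegree := Polynomial.card_roots' g
    _ ≤ q := hdeg

lemma exists_normal_indicator (hq2 : 2 ≤ q) (s : Finset (F × F))
    (hs : ∀ P ∈ s, P.2 ^ q + P.2 = P.1 ^ (q+1)) (pt : F × F) (hpt : pt ∈ s) :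
    ∃ P : MvPolynomial (Fin 2) F, (∀ d ∈ P.support, d 1 < q) ∧
      eval ![pt.1, pt.2] P = 1 ∧
      (∀ pt' ∈ s, pt' ≠ pt → eval ![pt'.1, pt'.2] P = 0) := by
  classical
  set Sx : Finset F := (s.image Prod.fst).erase pt.1 with hSx
  set fib : Finset F := ((s.filter (fun Q : F × F => Q.1 = pt.1)).image Prod.snd).erase pt.2
    with hfib
  set P₁ : MvPolynomial (Fin 2) F := ∏ a ∈ Sx, (X 0 - C a) with hP₁
  set P₂ : MvPolynomial (Fin 2) F := ∏ b ∈ fib, (X 1 - C b) with hP₂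
  have heval : ∀ u v : F, eval ![u, v] (P₁ * P₂)
      = (∏ a ∈ Sx, (u - a)) * (∏ b ∈ fib, (v - b)) := by
    intro u v
    rw [map_mul, hP₁, hP₂, map_prod, map_prod]
    congr 1 <;> refine Finset.prod_congr rfl fun a _ => by simp
  set val : F := (∏ a ∈ Sx, (pt.1 - a)) * (∏ b ∈ fib, (pt.2 - b)) with hval
  have hvalne : val ≠ 0 := by
    rw [hval]
    refine mul_ne_zero (Finset.prod_ne_zero_iff.2 fun a ha => ?_)
      (Finset.prod_ne_zero_iff.2 fun b hb => ?_)
    · exact sub_ne_zero_of_ne (fun h => Finset.ne_of_mem_erase ha h.symm)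
    · exact sub_ne_zero_of_ne (fun h => Finset.ne_of_mem_erase hb h.symm)
  refine ⟨C val⁻¹ * (P₁ * P₂), ?_, ?_, ?_⟩
  · intro d hd
    have h1 : d 1 ≤ degreeOf 1 (C val⁻¹ * (P₁ * P₂)) := monomial_le_degreeOf 1 hd
    have h2 : degreeOf 1 (C val⁻¹ * (P₁ * P₂)) ≤ q - 1 := by
      refine le_trans (degreeOf_mul_le _ _ _) ?_
      rw [degreeOf_C, zero_add]
      refine le_trans (degreeOf_mul_le _ _ _) ?_
      have hd1 : degreeOf 1 P₁ = 0 := by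
        rw [hP₁]
        refine Nat.eq_zero_of_le_zero (le_trans (degreeOf_prod_le _ _ _) ?_)
        exact le_of_eq (Finset.sum_eq_zero fun a _ => degreeOf_X0_sub_C a)
      have hd2 : degreeOf 1 P₂ ≤ q - 1 := by
        rw [hP₂]
        refine le_trans (degreeOf_prod_le _ _ _) ?_
        have hcard : fib.card ≤ q - 1 := by
          have h3 : pt.2 ∈ (s.filter (fun Q : F × F => Q.1 = pt.1)).image Prod.snd :=
            mem_image.2 ⟨pt, mem_filter.2 ⟨hpt, rfl⟩, rfl⟩
          have h4 := fiber_card_le q hq2 s hs pt.1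
          rw [hfib, Finset.card_erase_of_mem h3]
          omega
        calc ∑ b ∈ fib, degreeOf 1 (X 1 - C b)
            ≤ ∑ _b ∈ fib, 1 := Finset.sum_le_sum fun b _ => degreeOf_X1_sub_C b
          _ = fib.card := by rw [Finset.sum_const, smul_eq_mul, mul_one]
          _ ≤ q - 1 := hcard
      omega
    omega
  · rw [map_mul, eval_C, heval, ← hval, inv_mul_cancel₀ hvalne]
  · intro pt' hpt' hne
    rw [map_mul, eval_C, heval]
    by_cases hx : pt'.1 = pt.1
    · have hy : pt'.2 ≠ pt.2 := fun hy => hne (Prod.ext hx hy)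
      have hmem : pt'.2 ∈ fib := by
        rw [hfib, Finset.mem_erase]
        exact ⟨hy, mem_image.2 ⟨pt', mem_filter.2 ⟨hpt', hx⟩, rfl⟩⟩
      rw [Finset.prod_eq_zero hmem (sub_self pt'.2), mul_zero, mul_zero]
    · have hmem : pt'.1 ∈ Sx := by
        rw [hSx, Finset.mem_erase]
        exact ⟨hx, mem_image.2 ⟨pt', hpt', rfl⟩⟩
      rw [Finset.prod_eq_zero hmem (sub_self pt'.1), zero_mul, mul_zero]

end Stmt7Aux2

namespace Stmt7Aux2
open Finset MvPolynomial

variable (q : ℕ) {F : Type} [Field F]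

/-- the evaluation linear map at the points of a finset -/
noncomputable def evmap (s : Finset (F × F)) : MvPolynomial (Fin 2) F →ₗ[F] ((↥s) → F) where
  toFun := fun P pt => eval ![(pt : F × F).1, (pt : F × F).2] P
  map_add' := by intro P Q; funext pt; simp
  map_smul' := by intro c P; funext pt; simp [smul_eq_C_mul]

lemma part_b (hq2 : 2 ≤ q) [Fintype F] (E : Set (F × F))
    (hE : ∀ P ∈ E, P.2 ^ q + P.2 = P.1 ^ (q + 1)) (Λ : MvPolynomial (Fin 2) F)
    (hne : Λ ≠ 0) (hdeg : MvPolynomial.degreeOf 1 Λ ≤ q - 1)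
    (hvan : ∀ P ∈ E, MvPolynomial.eval ![P.1, P.2] Λ = 0) :
    E.ncard ≤ MvPolynomial.weightedTotalDegree ![q, q + 1] Λ := by
  classical
  have hq0 : 0 < q := by omega
  have hΛn : ∀ d ∈ Λ.support, d 1 < q := by
    intro d hd
    have := (degreeOf_le_iff.1 hdeg) d hd
    omega
  have hsne : Λ.support.Nonempty :=
    Finset.nonempty_iff_ne_empty.2 (fun h => hne (MvPolynomial.support_eq_empty.1 h))
  obtain ⟨dm, hdm, hdmsup⟩ := Finset.exists_mem_eq_sup Λ.support hsne (W q)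
  have htop : ∀ d ∈ Λ.support, d ≠ dm → W q d < W q dm := by
    intro d hd hne'
    have h1 : W q d ≤ W q dm := by rw [← hdmsup]; exact Finset.le_sup hd
    refine lt_of_le_of_ne h1 (fun h => hne' (normal_inj q hq0 (hΛn d hd) (hΛn dm hdm) h))
  set D := W q dm with hD
  have hwtd : MvPolynomial.weightedTotalDegree ![q, q + 1] Λ = D := by
    rw [MvPolynomial.weightedTotalDegree, ← hdmsup]
    exact Finset.sup_congr rfl (fun d _ => weight_eq q d)
  rw [hwtd]
  have hDS : Stmt7Aux.inS q D := inS_W q hq0 (hΛn dm hdm)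
  set s : Finset (F × F) := E.toFinite.toFinset with hs
  have hcard : E.ncard = s.card := Set.ncard_eq_toFinset_card E E.toFinite
  have hsE : ∀ P ∈ s, P ∈ E := fun P hP => (Set.Finite.mem_toFinset _).1 hP
  have hscurve : ∀ P ∈ s, P.2 ^ q + P.2 = P.1 ^ (q + 1) := fun P hP => hE P (hsE P hP)
  set ev := evmap (F := F) s with hev
  -- the finset of small-cofootprint exponents
  set T' : Finset (Fin 2 →₀ ℕ) := ((Finset.range (D + q * q)).filter
      (fun t => Stmt7Aux.inS q t ∧ ¬(D ≤ t ∧ Stmt7Aux.inS q (t - D)))).image (expOf q) with hT'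
  have hT'card : T'.card ≤ D :=
    le_trans Finset.card_image_le (Stmt7Aux.count_T' q D hq0 hDS)
  -- T' is exactly the set of monomial generators
  have hsetEq : {d : Fin 2 →₀ ℕ | d 1 < q ∧ ¬(D ≤ W q d ∧ Stmt7Aux.inS q (W q d - D))}
      = (T' : Set (Fin 2 →₀ ℕ)) := by
    ext d
    constructor
    · rintro ⟨hd1, hd2⟩
      rw [Finset.mem_coe, hT', Finset.mem_image]
      have hrange : W q d < D + q * q := by
        by_contra hcon
        push_neg at hcon
        refine hd2 ⟨by omega, ?_⟩
        exact Stmt7Aux.inS_large q hq0 (by omega)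
      refine ⟨W q d, Finset.mem_filter.2 ⟨Finset.mem_range.2 hrange,
        inS_W q hq0 hd1, hd2⟩, ?_⟩
      exact normal_inj q hq0 (expOf_normal q _ hq0) hd1
        (by rw [W_expOf q (inS_W q hq0 hd1)])
    · intro hd
      rw [Finset.mem_coe, hT', Finset.mem_image] at hd
      obtain ⟨t, htmem, rfl⟩ := hd
      obtain ⟨htN, htS, htc⟩ := Finset.mem_filter.1 htmem
      have h1 := expOf_normal q t hq0
      have h2 : W q (expOf q t) = t := W_expOf q htS
      exact ⟨h1, by rw [h2]; exact htc⟩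
  set X : Finset ((↥s) → F) := T'.image (fun d => ev (monomial d 1)) with hX
  -- each point indicator lies in the span of X
  have hind : ∀ pt : ↥s, (fun j => if pt = j then (1:F) else 0) ∈
      Submodule.span F (X : Set ((↥s) → F)) := by
    intro pt
    obtain ⟨P, hPn, hP1, hP0⟩ := exists_normal_indicator q hq2 s hscurve (pt : F × F) pt.2
    have hPmem : P ∈ Submodule.span F (gens q Λ D) :=
      mem_span_gens' q hq2 Λ hΛn hdm htop P hPn
    have hevP : ev P = (fun j => if pt = j then (1:F) else 0) := by
      funext pt'
      show eval ![(pt' : F × F).1, (pt' : F × F).2] P = _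
      by_cases hc : pt = pt'
      · subst hc; rw [if_pos rfl]; exact hP1
      · rw [if_neg hc]
        exact hP0 (pt' : F × F) pt'.2 (fun h => hc (Subtype.ext h.symm))
    rw [← hevP]
    have h1 : ev P ∈ Submodule.map ev (Submodule.span F (gens q Λ D)) :=
      Submodule.mem_map_of_mem hPmem
    rw [Submodule.map_span] at h1
    refine Submodule.span_le.2 ?_ h1
    rintro x ⟨y, hy, rfl⟩
    rcases hy with ⟨d, hd, rfl⟩ | ⟨μ, hμ, rfl⟩
    · refine Submodule.subset_span ?_
      rw [hX, Finset.coe_image]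
      refine Set.mem_image_of_mem _ ?_
      rw [← hsetEq]
      exact hd
    · have hz : ev (Qpoly q Λ μ) = 0 := by
        funext pt'
        show eval ![(pt' : F × F).1, (pt' : F × F).2] (Qpoly q Λ μ) = 0
        rw [eval_Qpoly q (hscurve (pt' : F × F) pt'.2) Λ μ,
          hvan (pt' : F × F) (hsE _ pt'.2), zero_mul]
      rw [hz]
      exact Submodule.zero_mem _
  have hXtop : Submodule.span F (X : Set ((↥s) → F)) = ⊤ := by
    rw [eq_top_iff]
    intro g _
    rw [pi_eq_sum_univ g]
    refine Submodule.sum_mem _ (fun pt _ => Submodule.smul_mem _ _ ?_)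
    exact hind pt
  -- rank comparison
  have h1 : Module.finrank F ((↥s) → F) ≤ X.card := by
    have h2 : Module.finrank F ((↥s) → F) =
        Module.finrank F (Submodule.span F (X : Set ((↥s) → F))) := by
      rw [hXtop]
      exact (finrank_top F _).symm
    rw [h2]
    simpa using finrank_span_le_card (X : Set ((↥s) → F))
  have h3 : Module.finrank F ((↥s) → F) = s.card := by
    rw [Module.finrank_pi F, Fintype.card_coe]
  have h4 : X.card ≤ T'.card := Finset.card_image_le
  omega

end Stmt7Aux2

namespace Stmt7Aux2
open Finset MvPolynomial

variable (q : ℕ) {F : Type} [Field F]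

/-- linear combination of monomials indexed by a finset of exponents -/
noncomputable def combo (Ta : Finset (Fin 2 →₀ ℕ)) : ((↥Ta) → F) →ₗ[F] MvPolynomial (Fin 2) F where
  toFun := fun c => ∑ d ∈ Ta.attach, c d • monomial (d : Fin 2 →₀ ℕ) 1
  map_add' := by intro c c'; simp [add_smul, Finset.sum_add_distrib]
  map_smul' := by intro a c; simp [Finset.smul_sum, smul_smul]

lemma coeff_combo (Ta : Finset (Fin 2 →₀ ℕ)) (c : (↥Ta) → F) (d₀ : ↥Ta) :
    coeff (d₀ : Fin 2 →₀ ℕ) (combo (F := F) Ta c) = c d₀ := by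
  rw [combo]
  simp only [LinearMap.coe_mk, AddHom.coe_mk]
  rw [MvPolynomial.coeff_sum, Finset.sum_eq_single_of_mem d₀ (Finset.mem_attach _ _)]
  · rw [MvPolynomial.coeff_smul, coeff_monomial, if_pos rfl, smul_eq_mul, mul_one]
  · intro d _ hne
    rw [MvPolynomial.coeff_smul, coeff_monomial,
      if_neg (fun h => hne (Subtype.ext h)), smul_eq_mul, mul_zero]

lemma support_combo (Ta : Finset (Fin 2 →₀ ℕ)) (c : (↥Ta) → F) :
    (combo (F := F) Ta c).support ⊆ Ta := by
  intro d hd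
  have hcd : coeff d (combo (F := F) Ta c) ≠ 0 := mem_support_iff.1 hd
  rw [combo] at hcd
  simp only [LinearMap.coe_mk, AddHom.coe_mk] at hcd
  rw [MvPolynomial.coeff_sum] at hcd
  obtain ⟨e, he, hene⟩ := Finset.exists_ne_zero_of_sum_ne_zero hcd
  rw [MvPolynomial.coeff_smul, coeff_monomial] at hene
  by_cases hde : (e : Fin 2 →₀ ℕ) = d
  · rw [← hde]; exact e.2
  · rw [if_neg hde, smul_eq_mul, mul_zero] at hene
    exact absurd rfl hene

lemma part_a (hq2 : 2 ≤ q) [Fintype F] (E : Set (F × F)) :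
    ∃ Λ : MvPolynomial (Fin 2) F, Λ ≠ 0 ∧
      MvPolynomial.degreeOf 1 Λ ≤ q - 1 ∧
      (∀ P ∈ E, MvPolynomial.eval ![P.1, P.2] Λ = 0) ∧
      MvPolynomial.weightedTotalDegree ![q, q + 1] Λ ≤ E.ncard + q * (q - 1) / 2 := by
  classical
  have hq0 : 0 < q := by omega
  set m : ℕ := E.ncard + q * (q - 1) / 2 with hm
  set s : Finset (F × F) := E.toFinite.toFinset with hs
  have hcard : E.ncard = s.card := Set.ncard_eq_toFinset_card E E.toFinite
  set Ta : Finset (Fin 2 →₀ ℕ) := (Stmt7Aux.Sfin q (m + 1)).image (expOf q) with hTa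
  have hTacard : Ta.card = (Stmt7Aux.Sfin q (m + 1)).card := by
    rw [hTa]
    refine Finset.card_image_of_injOn ?_
    intro t ht t' ht' he
    have h1 : Stmt7Aux.inS q t := (Finset.mem_filter.1 ht).2
    have h2 : Stmt7Aux.inS q t' := (Finset.mem_filter.1 ht').2
    rw [← W_expOf q h1, ← W_expOf q h2, he]
  have hTabig : E.ncard + 1 ≤ Ta.card := by
    have := Stmt7Aux.card_Sfin_ge q (m + 1) hq0
    omega
  set φ := (evmap (F := F) s).comp (combo (F := F) Ta) with hφ
  have hninj : ¬ Function.Injective φ := by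
    intro hinj
    have h1 := LinearMap.finrank_le_finrank_of_injective hinj
    rw [Module.finrank_pi F, Module.finrank_pi F, Fintype.card_coe, Fintype.card_coe] at h1
    omega
  rw [Function.not_injective_iff] at hninj
  obtain ⟨c₁, c₂, hceq, hcne⟩ := hninj
  set c := c₁ - c₂ with hc
  have hc0 : c ≠ 0 := sub_ne_zero_of_ne hcne
  have hφc : φ c = 0 := by rw [hc, map_sub, hceq, sub_self]
  set Λ := combo (F := F) Ta c with hΛ
  obtain ⟨d₀, hd₀⟩ : ∃ d₀ : ↥Ta, c d₀ ≠ 0 := by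
    by_contra hcon
    push_neg at hcon
    exact hc0 (funext fun d => hcon d)
  have hΛne : Λ ≠ 0 := by
    intro h
    have := coeff_combo Ta c d₀
    rw [← hΛ, h, coeff_zero] at this
    exact hd₀ this.symm
  have hTaprop : ∀ d ∈ Ta, d 1 < q ∧ W q d ≤ m := by
    intro d hd
    rw [hTa, Finset.mem_image] at hd
    obtain ⟨t, ht, rfl⟩ := hd
    obtain ⟨htr, hts⟩ := Finset.mem_filter.1 ht
    rw [Finset.mem_range] at htr
    exact ⟨expOf_normal q t hq0, by rw [W_expOf q hts]; omega⟩
  refine ⟨Λ, hΛne, ?_, ?_, ?_⟩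
  · rw [degreeOf_le_iff]
    intro d hd
    have := (hTaprop d (support_combo Ta c hd)).1
    omega
  · intro P hP
    have hPmem : P ∈ s := (Set.Finite.mem_toFinset _).2 hP
    have := congrFun hφc ⟨P, hPmem⟩
    rw [hφ] at this
    exact this
  · rw [MvPolynomial.weightedTotalDegree]
    refine Finset.sup_le fun d hd => ?_
    rw [weight_eq]
    exact (hTaprop d (support_combo Ta c hd)).2

end Stmt7Aux2

/-- Let `F` be the field with `q²` elements, `q = p^e`, and let `E` be a set of affine
points of the Hermitian curve `β^q + β = α^(q+1)`, which has genus `g = q(q-1)/2`.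
Then (a) there is a nonzero polynomial with `y`-degree at most `q - 1` vanishing on `E`
and of weighted degree `deg_{q,q+1}` at most `|E| + g`, and (b) every nonzero polynomial
with `y`-degree at most `q - 1` vanishing on `E` has weighted degree at least `|E|`. -/
theorem stmt_7 (p e : ℕ) (hp : p.Prime) (he : 0 < e) (q : ℕ) (hq : q = p ^ e)
    (F : Type) [Field F] [Fintype F] (hF : Fintype.card F = q ^ 2)
    (E : Set (F × F)) (hE : ∀ P ∈ E, P.2 ^ q + P.2 = P.1 ^ (q + 1)) :
    (∃ Λ : MvPolynomial (Fin 2) F, Λ ≠ 0 ∧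
      MvPolynomial.degreeOf 1 Λ ≤ q - 1 ∧
      (∀ P ∈ E, MvPolynomial.eval ![P.1, P.2] Λ = 0) ∧
      MvPolynomial.weightedTotalDegree ![q, q + 1] Λ ≤ E.ncard + q * (q - 1) / 2) ∧
    (∀ Λ : MvPolynomial (Fin 2) F, Λ ≠ 0 →
      MvPolynomial.degreeOf 1 Λ ≤ q - 1 →
      (∀ P ∈ E, MvPolynomial.eval ![P.1, P.2] Λ = 0) →
      E.ncard ≤ MvPolynomial.weightedTotalDegree ![q, q + 1] Λ) := by
  have hq2 : 2 ≤ q := by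
    rw [hq]
    calc 2 ≤ p := hp.two_le
    _ = p ^ 1 := (pow_one p).symm
    _ ≤ p ^ e := Nat.pow_le_pow_right (Nat.one_le_of_lt hp.one_lt) he
  exact ⟨Stmt7Aux2.part_a q hq2 E,
    fun Λ h1 h2 h3 => Stmt7Aux2.part_b q hq2 E hE Λ h1 h2 h3⟩
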